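/- Let Ω ⊆ ℝ^n be a nonempty convex set, let the objective J = J₁ − J₂ on Ω with J₁, J₂ : Ω → ℝ convex and J₂ differentiable, and let constraints g_i = g_{i,1} − g_{i,2} be difference-of-convex as above, with convexifications J̄(x; z) = J₁(x) − [ J₂(z) + ∇J₂(z)·(x − z) ] and ḡ_i(x; z) = g_{i,1}(x) − [ g_{i,2}(z) + ∇g_{i,2}(z)·(x − z) ]. Suppose x^{(q)} ∈ F̄(x^{(q)}) := {x : ḡ_i(x; x^{(q)}) ≤ 0 ∀i}, and x^{(q+1)} minimizes J̄(·; x^{(q)}) over F̄(x^{(q)}). Then the true cost is non-increasing: J(x^{(q+1)}) ≤ J̄(x^{(q+1)}; x^{(q)}) ≤ J̄(x^{(q)}; x^{(q)}) = J(x^{(q)}). -/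

import Mathlib

open Set RealInnerProductSpace Topology Filter

lemma grad_ineq_aux {E : Type*} [NormedAddCommGroup E] [InnerProductSpace ℝ E] [CompleteSpace E]
    {s : Set E} {f : E → ℝ} (hf : ConvexOn ℝ s f) {z x : E} (hz : z ∈ s) (hx : x ∈ s)
    {G : E} (hG : HasGradientAt f G z) : ⟪G, x - z⟫ ≤ f x - f z := by
  set h := x - z with hh
  have hline : HasDerivAt (fun t : ℝ => z + t • h) h 0 := by
    simpa using ((hasDerivAt_id (0 : ℝ)).smul_const h).const_add z
  have hφ : HasDerivAt (fun t : ℝ => f (z + t • h)) ⟪G, h⟫ 0 := by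
    have hz0 : HasFDerivAt f ((InnerProductSpace.toDual ℝ E) G) (z + (0:ℝ) • h) := by
      simpa using hG.hasFDerivAt
    have := hz0.comp_hasDerivAt 0 hline
    simp at this
    exact this
  have key : ∀ t ∈ Ioc (0:ℝ) 1, (f (z + t • h) - f z) / t ≤ f x - f z := by
    intro t ht
    have hconv := hf.2 hz hx (by linarith [ht.2] : (0:ℝ) ≤ 1 - t) ht.1.le (by ring)
    have heq : (1 - t) • z + t • x = z + t • h := by
      rw [hh]; module
    rw [heq] at hconv
    rw [div_le_iff₀ ht.1]
    have : f (z + t • h) ≤ (1 - t) * f z + t * f x := by simpa using hconv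
    nlinarith
  have htend : Filter.Tendsto (slope (fun t : ℝ => f (z + t • h)) 0) (𝓝[>] 0) (𝓝 ⟪G, h⟫) :=
    (hasDerivAt_iff_tendsto_slope.mp hφ).mono_left
      (nhdsWithin_mono _ (fun t ht => ne_of_gt ht))
  refine le_of_tendsto htend ?_
  filter_upwards [Ioc_mem_nhdsGT_of_mem (by norm_num : (0:ℝ) ∈ Ico (0:ℝ) 1)] with t ht
  have h0 : f (z + (0:ℝ) • h) = f z := by simp
  simpa [slope_def_field, h0, div_eq_inv_mul, mul_comm] using key t ht

theorem statement_16 {n m : ℕ}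
    (Ω : Set (EuclideanSpace ℝ (Fin n))) (hΩne : Ω.Nonempty) (hΩconv : Convex ℝ Ω)
    (J J1 J2 : EuclideanSpace ℝ (Fin n) → ℝ)
    (hJ : ∀ x ∈ Ω, J x = J1 x - J2 x)
    (hJ1 : ConvexOn ℝ Ω J1) (hJ2 : ConvexOn ℝ Ω J2)
    (GJ : EuclideanSpace ℝ (Fin n) → EuclideanSpace ℝ (Fin n))
    (hGJ : ∀ z ∈ Ω, HasGradientAt J2 (GJ z) z)
    (Jbar : EuclideanSpace ℝ (Fin n) → EuclideanSpace ℝ (Fin n) → ℝ)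
    (hJbar : ∀ x z, Jbar x z = J1 x - (J2 z + ⟪GJ z, x - z⟫))
    (g g1 g2 : Fin m → EuclideanSpace ℝ (Fin n) → ℝ)
    (hg : ∀ i, ∀ x ∈ Ω, g i x = g1 i x - g2 i x)
    (hg1 : ∀ i, ConvexOn ℝ Ω (g1 i)) (hg2 : ∀ i, ConvexOn ℝ Ω (g2 i))
    (G : Fin m → EuclideanSpace ℝ (Fin n) → EuclideanSpace ℝ (Fin n))
    (hG : ∀ i, ∀ z ∈ Ω, HasGradientAt (g2 i) (G i z) z)
    (gbar : Fin m → EuclideanSpace ℝ (Fin n) → EuclideanSpace ℝ (Fin n) → ℝ)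
    (hgbar : ∀ i x z, gbar i x z = g1 i x - (g2 i z + ⟪G i z, x - z⟫))
    (Fbar : EuclideanSpace ℝ (Fin n) → Set (EuclideanSpace ℝ (Fin n)))
    (hFbar : ∀ z, Fbar z = {x ∈ Ω | ∀ i, gbar i x z ≤ 0})
    (xq xq1 : EuclideanSpace ℝ (Fin n))
    (hxq : xq ∈ Fbar xq)
    (hxq1 : xq1 ∈ Fbar xq)
    (hxq1min : ∀ y ∈ Fbar xq, Jbar xq1 xq ≤ Jbar y xq) :
    J xq1 ≤ Jbar xq1 xq ∧ Jbar xq1 xq ≤ Jbar xq xq ∧ Jbar xq xq = J xq := by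
  rw [hFbar] at hxq hxq1
  have hxqΩ : xq ∈ Ω := hxq.1
  have hxq1Ω : xq1 ∈ Ω := hxq1.1
  have hgrad := grad_ineq_aux hJ2 hxqΩ hxq1Ω (hGJ xq hxqΩ)
  refine ⟨?_, hxq1min xq (by rw [hFbar]; exact hxq), ?_⟩
  · rw [hJ xq1 hxq1Ω, hJbar]; linarith
  · rw [hJbar, hJ xq hxqΩ]; simp
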